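/- For every positive integer n, r₀(n) = ∑_{d ∣ n} χ(d), where χ is the non-principal Dirichlet character modulo 4 (χ(d) = 1 if d ≡ 1 mod 4, χ(d) = −1 if d ≡ 3 mod 4, χ(d) = 0 if d is even). -/

import Mathlib

/-- Number of representations of `n` as `a² + b²` with `a ≥ 0`, `b ≥ 1`. -/
noncomputable def r0 (n : ℕ) : ℕ :=
  Nat.card {p : ℕ × ℕ // 0 < p.2 ∧ p.1 ^ 2 + p.2 ^ 2 = n}

/-- The non-principal Dirichlet character modulo 4. -/
def chi4 (d : ℕ) : ℤ :=
  if d % 4 = 1 then 1 else if d % 4 = 3 then -1 else 0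

open Zsqrtd
local notation "GI" => GaussianInt

namespace TwoSq


lemma norm_eq (z : GI) : z.norm = z.re * z.re + z.im * z.im := by
  simp [Zsqrtd.norm]

lemma isUnit_iff (u : GI) :
    IsUnit u ↔ u = ⟨1,0⟩ ∨ u = ⟨-1,0⟩ ∨ u = ⟨0,1⟩ ∨ u = ⟨0,-1⟩ := by
  rw [← Zsqrtd.norm_eq_one_iff' (by norm_num) u, norm_eq]
  constructor
  · intro h
    have h1 : -1 ≤ u.re ∧ u.re ≤ 1 := by constructor <;> nlinarith [sq_nonneg u.im, sq_nonneg u.re]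
    have h2 : -1 ≤ u.im ∧ u.im ≤ 1 := by constructor <;> nlinarith [sq_nonneg u.im, sq_nonneg u.re]
    have : (u.re = 1 ∧ u.im = 0) ∨ (u.re = -1 ∧ u.im = 0) ∨ (u.re = 0 ∧ u.im = 1)
        ∨ (u.re = 0 ∧ u.im = -1) := by
      rcases h1 with ⟨a1, a2⟩; rcases h2 with ⟨b1, b2⟩
      interval_cases h : u.re <;> interval_cases h2 : u.im <;> omega
    rcases this with ⟨h1,h2⟩|⟨h1,h2⟩|⟨h1,h2⟩|⟨h1,h2⟩ <;>
      simp [Zsqrtd.ext_iff, h1, h2]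
  · rintro (rfl|rfl|rfl|rfl) <;> norm_num

/-- predicate: being in the canonical quadrant -/
def Quad (z : GI) : Prop := 0 ≤ z.re ∧ 1 ≤ z.im

lemma quad_unique {y w : GI} (hy : Quad y) (hw : Quad w) (h : Associated y w) : y = w := by
  obtain ⟨u, hu⟩ := h
  have := (isUnit_iff u.val).1 u.isUnit
  obtain ⟨hy1, hy2⟩ := hy; obtain ⟨hw1, hw2⟩ := hw
  rcases this with h'|h'|h'|h' <;> rw [h'] at hu <;> subst hu <;>
    simp [Zsqrtd.ext_iff, Zsqrtd.re_mul, Zsqrtd.im_mul] at hw1 hw2 ⊢ <;> omega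

/-- canonical representative in the quadrant among associates -/
def quadRep (z : GI) : GI :=
  if 0 ≤ z.re ∧ 1 ≤ z.im then z
  else if z.re ≤ -1 ∧ 0 ≤ z.im then ⟨z.im, -z.re⟩
  else if z.re ≤ 0 ∧ z.im ≤ -1 then -z
  else ⟨-z.im, z.re⟩

lemma quadRep_quad {z : GI} (hz : z ≠ 0) : Quad (quadRep z) := by
  have hz' : ¬ (z.re = 0 ∧ z.im = 0) := by
    intro ⟨h1, h2⟩; exact hz (Zsqrtd.ext h1 h2)
  unfold quadRep Quad
  split_ifs with h1 h2 h3 <;> simp [Zsqrtd.re_neg, Zsqrtd.im_neg] at * <;> omega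

lemma quadRep_assoc (z : GI) : Associated z (quadRep z) := by
  unfold quadRep
  split_ifs with h1 h2 h3
  · exact Associated.refl z
  · have h : IsUnit (⟨0,-1⟩ : GI) := by
      rw [isUnit_iff]; tauto
    exact ⟨h.unit, by rw [IsUnit.unit_spec]; ext <;> simp [Zsqrtd.re_mul, Zsqrtd.im_mul] <;> ring⟩
  · have h : IsUnit (⟨-1,0⟩ : GI) := by rw [isUnit_iff]; tauto
    exact ⟨h.unit, by rw [IsUnit.unit_spec]; ext <;> simp [Zsqrtd.re_mul, Zsqrtd.im_mul]⟩
  · have h : IsUnit (⟨0,1⟩ : GI) := by rw [isUnit_iff]; tauto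
    exact ⟨h.unit, by rw [IsUnit.unit_spec]; ext <;> simp [Zsqrtd.re_mul, Zsqrtd.im_mul] <;> ring⟩

lemma quadRep_eq_self {z : GI} (h : Quad z) : quadRep z = z := if_pos h

lemma quadRep_eq_quadRep {z w : GI} (hz : z ≠ 0) (h : Associated z w) :
    quadRep z = quadRep w := by
  have hw : w ≠ 0 := fun hw0 => hz (h.eq_zero_iff.2 hw0)
  exact quad_unique (quadRep_quad hz) (quadRep_quad hw)
    ((quadRep_assoc z).symm.trans (h.trans (quadRep_assoc w)))

lemma norm_eq_of_associated {z w : GI} (h : Associated z w) : z.norm = w.norm := by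
  obtain ⟨u, hu⟩ := h
  have hu1 : (u : GI).norm = 1 := (Zsqrtd.norm_eq_one_iff' (by norm_num) _).2 u.isUnit
  rw [← hu, Zsqrtd.norm_mul, hu1, mul_one]

lemma quadRep_norm (z : GI) : (quadRep z).norm = z.norm :=
  (norm_eq_of_associated (quadRep_assoc z)).symm


lemma dvd_natCast_of_norm {z : GI} {n : ℕ} (h : z.norm = (n : ℤ)) : z ∣ (n : GI) :=
  ⟨star z, by rw [← Zsqrtd.norm_eq_mul_conj, h]; push_cast; ring⟩

lemma norm_dvd_norm {z w : GI} (h : z ∣ w) : z.norm ∣ w.norm := by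
  obtain ⟨t, rfl⟩ := h; rw [Zsqrtd.norm_mul]; exact Dvd.intro _ rfl

lemma associated_of_dvd_of_norm_eq {z w : GI} (h : z ∣ w) (hn : z.norm = w.norm)
    (hz : z ≠ 0) : Associated z w := by
  obtain ⟨t, rfl⟩ := h
  have h1 : z.norm * t.norm = z.norm * 1 := by rw [mul_one, ← Zsqrtd.norm_mul]; exact hn.symm
  have h2 : t.norm = 1 := by
    have := mul_left_cancel₀ (a := z.norm) (by simpa [Zsqrtd.norm_eq_zero_iff (by norm_num : (-1:ℤ) < 0)] using hz) h1
    exact this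
  exact ⟨((Zsqrtd.norm_eq_one_iff' (by norm_num) t).1 h2).unit, by simp⟩

lemma nonzero_of_norm_pos {z : GI} {n : ℕ} (hn : 0 < n) (h : z.norm = (n : ℤ)) : z ≠ 0 := by
  intro rfl_; subst rfl_; simp at h; omega

/-- the subtype of quadrant elements with norm n -/
def QS (n : ℕ) := {z : GI // z.norm = (n : ℤ) ∧ Quad z}

def r0Equiv (n : ℕ) : {p : ℕ × ℕ // 0 < p.2 ∧ p.1 ^ 2 + p.2 ^ 2 = n} ≃ QS n where
  toFun p := ⟨⟨(p.val.1 : ℤ), (p.val.2 : ℤ)⟩, by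
    obtain ⟨⟨a, b⟩, hb, hab⟩ := p
    dsimp only
    refine ⟨?_, by positivity, by show (1:ℤ) ≤ (b:ℤ); exact_mod_cast hb⟩
    show Zsqrtd.norm _ = (n : ℤ)
    simp only [Zsqrtd.norm]
    push_cast [← hab]
    ring⟩
  invFun z := ⟨(z.val.re.toNat, z.val.im.toNat), by
    obtain ⟨z, hn, h0, h1⟩ := z
    dsimp only
    constructor
    · omega
    · have h2 : (z.re.toNat : ℤ) = z.re := Int.toNat_of_nonneg h0
      have h2' : (z.im.toNat : ℤ) = z.im := Int.toNat_of_nonneg (by omega)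
      have h4 := hn
      simp only [Zsqrtd.norm] at h4
      have h3 : ((z.re.toNat ^ 2 + z.im.toNat ^ 2 : ℕ) : ℤ) = (n : ℤ) := by
        push_cast [h2, h2']
        linarith [h4]
      exact_mod_cast h3⟩
  left_inv p := by
    obtain ⟨⟨a, b⟩, hb, hab⟩ := p
    apply Subtype.ext
    simp
  right_inv z := by
    obtain ⟨z, hn, h0, h1⟩ := z
    apply Subtype.ext
    apply Zsqrtd.ext <;> simp <;> omega

lemma r0_eq_card (n : ℕ) : r0 n = Nat.card (QS n) := Nat.card_congr (r0Equiv n)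


lemma isCoprime_natCast {m n : ℕ} (h : Nat.Coprime m n) : IsCoprime (m : GI) (n : GI) := by
  have h1 : IsCoprime (m : ℤ) (n : ℤ) := Int.isCoprime_iff_gcd_eq_one.2 (by simpa using h)
  have h2 := h1.map (Int.castRingHom GI)
  simpa using h2

/-- key lemma: a divisor of `z` of norm `m` is associated to `gcd z m` -/
lemma assoc_gcd {m n : ℕ} (hm : 0 < m) (hn : 0 < n) (h : Nat.Coprime m n)
    {z w : GI} (hz : z.norm = ((m * n : ℕ) : ℤ)) (hw : w ∣ z) (hwm : w.norm = (m : ℤ)) :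
    Associated w (EuclideanDomain.gcd z (m : GI)) := by
  set g := EuclideanDomain.gcd z (m : GI) with hg
  have hwg : w ∣ g := EuclideanDomain.dvd_gcd hw (dvd_natCast_of_norm hwm)
  -- norm g divides gcd (m*n) (m*m) = m (as naturals)
  have h1 : g.norm ∣ ((m * n : ℕ) : ℤ) := hz ▸ norm_dvd_norm (EuclideanDomain.gcd_dvd_left _ _)
  have h2 : g.norm ∣ ((m * m : ℕ) : ℤ) := by
    have := norm_dvd_norm (EuclideanDomain.gcd_dvd_right z (m : GI))
    rwa [Zsqrtd.norm_natCast, ← Nat.cast_mul] at this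
  have hgnn : 0 ≤ g.norm := Zsqrtd.norm_nonneg (by norm_num) g
  have h3 : g.norm.natAbs ∣ m := by
    have d1 : g.norm.natAbs ∣ m * n := by
      have := Int.natAbs_dvd_natAbs.2 h1
      rwa [Int.natAbs_natCast] at this
    have d2 : g.norm.natAbs ∣ m * m := by
      have := Int.natAbs_dvd_natAbs.2 h2
      rwa [Int.natAbs_natCast] at this
    have : g.norm.natAbs ∣ Nat.gcd (m * n) (m * m) := Nat.dvd_gcd d1 d2
    rwa [Nat.gcd_mul_left, Nat.Coprime.gcd_eq_one h.symm, mul_one] at this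
  -- m = norm w divides norm g
  have h4 : (m : ℤ) ∣ g.norm := hwm ▸ norm_dvd_norm hwg
  have h5 : g.norm = (m : ℤ) := by
    have h4' : m ∣ g.norm.natAbs := by
      have := Int.natAbs_dvd_natAbs.2 h4
      rwa [Int.natAbs_natCast] at this
    have := Nat.dvd_antisymm h3 h4'
    omega
  exact associated_of_dvd_of_norm_eq hwg (by rw [h5, hwm]) (nonzero_of_norm_pos hm hwm)

lemma gcd_decomp {m n : ℕ} (hm : 0 < m) (hn : 0 < n) (h : Nat.Coprime m n)
    {z : GI} (hz : z.norm = ((m * n : ℕ) : ℤ)) :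
    (EuclideanDomain.gcd z (m : GI)).norm = (m : ℤ) ∧
    (EuclideanDomain.gcd z (n : GI)).norm = (n : ℤ) ∧
    Associated z (EuclideanDomain.gcd z (m : GI) * EuclideanDomain.gcd z (n : GI)) := by
  set g₁ := EuclideanDomain.gcd z (m : GI) with hg1
  set g₂ := EuclideanDomain.gcd z (n : GI) with hg2
  have hznz : z ≠ 0 := nonzero_of_norm_pos (by positivity) hz
  -- z ∣ g₁ * g₂ via Bezout
  have hzmn : z ∣ ((m * n : ℕ) : GI) := dvd_natCast_of_norm hz
  have hb1 := EuclideanDomain.gcd_eq_gcd_ab z (m : GI)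
  have hb2 := EuclideanDomain.gcd_eq_gcd_ab z (n : GI)
  have hdvd1 : z ∣ g₁ * g₂ := by
    obtain ⟨s, hs⟩ := hzmn
    refine ⟨EuclideanDomain.gcdA z (m:GI) * z * EuclideanDomain.gcdA z (n:GI)
      + EuclideanDomain.gcdA z (m:GI) * (n:GI) * EuclideanDomain.gcdB z (n:GI)
      + (m:GI) * EuclideanDomain.gcdB z (m:GI) * EuclideanDomain.gcdA z (n:GI)
      + s * EuclideanDomain.gcdB z (m:GI) * EuclideanDomain.gcdB z (n:GI), ?_⟩
    rw [← hg1] at hb1; rw [← hg2] at hb2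
    rw [hb1, hb2]
    have : ((m:GI) * (n:GI)) = z * s := by push_cast at hs ⊢; rw [← hs]
    linear_combination (EuclideanDomain.gcdB z (m:GI) * EuclideanDomain.gcdB z (n:GI)) * this
  -- g₁ * g₂ ∣ z
  have hcop : IsCoprime g₁ g₂ :=
    IsCoprime.of_isCoprime_of_dvd_right
      (IsCoprime.of_isCoprime_of_dvd_left (isCoprime_natCast h) (EuclideanDomain.gcd_dvd_right z (m : GI)))
      (EuclideanDomain.gcd_dvd_right z (n : GI))
  have hdvd2 : g₁ * g₂ ∣ z :=
    hcop.mul_dvd (EuclideanDomain.gcd_dvd_left _ _) (EuclideanDomain.gcd_dvd_left _ _)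
  have hassoc : Associated z (g₁ * g₂) := associated_of_dvd_dvd hdvd1 hdvd2
  -- norms
  have hnorm : (m * n : ℤ) = g₁.norm * g₂.norm := by
    have := norm_eq_of_associated hassoc
    rw [hz] at this; rw [← Zsqrtd.norm_mul, ← this]; push_cast; ring
  have h1nn : 0 ≤ g₁.norm := Zsqrtd.norm_nonneg (by norm_num) g₁
  have h2nn : 0 ≤ g₂.norm := Zsqrtd.norm_nonneg (by norm_num) g₂
  have d1 : g₁.norm.natAbs ∣ m := by
    have e1 : g₁.norm ∣ ((m * n : ℕ) : ℤ) := hz ▸ norm_dvd_norm (EuclideanDomain.gcd_dvd_left _ _)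
    have e2 : g₁.norm ∣ ((m * m : ℕ) : ℤ) := by
      have := norm_dvd_norm (EuclideanDomain.gcd_dvd_right z (m : GI))
      rwa [Zsqrtd.norm_natCast, ← Nat.cast_mul] at this
    have d1' := Int.natAbs_dvd_natAbs.2 e1
    have d2' := Int.natAbs_dvd_natAbs.2 e2
    rw [Int.natAbs_natCast] at d1' d2'
    have : g₁.norm.natAbs ∣ Nat.gcd (m * n) (m * m) := Nat.dvd_gcd d1' d2'
    rwa [Nat.gcd_mul_left, Nat.Coprime.gcd_eq_one h.symm, mul_one] at this
  have d2 : g₂.norm.natAbs ∣ n := by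
    have e1 : g₂.norm ∣ ((n * m : ℕ) : ℤ) := by
      rw [Nat.mul_comm n m]
      exact hz ▸ norm_dvd_norm (EuclideanDomain.gcd_dvd_left _ _)
    have e2 : g₂.norm ∣ ((n * n : ℕ) : ℤ) := by
      have := norm_dvd_norm (EuclideanDomain.gcd_dvd_right z (n : GI))
      rwa [Zsqrtd.norm_natCast, ← Nat.cast_mul] at this
    have d1' := Int.natAbs_dvd_natAbs.2 e1
    have d2' := Int.natAbs_dvd_natAbs.2 e2
    rw [Int.natAbs_natCast] at d1' d2'
    have : g₂.norm.natAbs ∣ Nat.gcd (n * m) (n * n) := Nat.dvd_gcd d1' d2'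
    rwa [Nat.gcd_mul_left, Nat.Coprime.gcd_eq_one h, mul_one] at this
  have hprod : g₁.norm.natAbs * g₂.norm.natAbs = m * n := by
    have : (↑(g₁.norm.natAbs * g₂.norm.natAbs) : ℤ) = ((m * n : ℕ) : ℤ) := by
      push_cast [Int.natAbs_of_nonneg h1nn, Int.natAbs_of_nonneg h2nn]
      linarith [hnorm]
    exact_mod_cast this
  have hm1 : g₁.norm.natAbs = m ∧ g₂.norm.natAbs = n := by
    have l1 := Nat.le_of_dvd hm d1
    have l2 := Nat.le_of_dvd hn d2
    have e1 : g₁.norm.natAbs * g₂.norm.natAbs ≤ m * g₂.norm.natAbs := Nat.mul_le_mul_right _ l1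
    have e2 : m * g₂.norm.natAbs ≤ m * n := Nat.mul_le_mul_left _ l2
    have hb : g₂.norm.natAbs = n := by
      have : m * g₂.norm.natAbs = m * n := le_antisymm e2 (by omega)
      exact Nat.eq_of_mul_eq_mul_left hm this
    have ha : g₁.norm.natAbs = m := by
      have : g₁.norm.natAbs * n = m * n := by rw [← hb]; omega
      exact Nat.eq_of_mul_eq_mul_right hn this
    exact ⟨ha, hb⟩
  refine ⟨?_, ?_, hassoc⟩
  · rw [← Int.natAbs_of_nonneg h1nn, hm1.1]
  · rw [← Int.natAbs_of_nonneg h2nn, hm1.2]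

open EuclideanDomain in
lemma card_QS_mul {m n : ℕ} (hm : 0 < m) (hn : 0 < n) (h : Nat.Coprime m n) :
    Nat.card (QS (m * n)) = Nat.card (QS m) * Nat.card (QS n) := by
  rw [← Nat.card_prod]
  symm
  have hf : ∀ w : QS m × QS n, ((w.1.val * w.2.val).norm = ((m * n : ℕ) : ℤ)) ∧ w.1.val * w.2.val ≠ 0 := by
    rintro ⟨⟨w₁, hw₁, q₁⟩, ⟨w₂, hw₂, q₂⟩⟩
    have : (w₁ * w₂).norm = ((m * n : ℕ) : ℤ) := by
      rw [Zsqrtd.norm_mul, hw₁, hw₂]; push_cast; ring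
    exact ⟨this, nonzero_of_norm_pos (by positivity) this⟩
  apply Nat.card_eq_of_bijective (f := fun w => (⟨quadRep (w.1.val * w.2.val),
    by rw [quadRep_norm]; exact (hf w).1, quadRep_quad (hf w).2⟩ : QS (m * n)))
  constructor
  · rintro ⟨⟨w₁, hw₁, q₁⟩, ⟨w₂, hw₂, q₂⟩⟩ ⟨⟨v₁, hv₁, p₁⟩, ⟨v₂, hv₂, p₂⟩⟩ heq
    simp only [Subtype.mk.injEq] at heq
    set z := quadRep (w₁ * w₂) with hzdef
    have hz : z.norm = ((m * n : ℕ) : ℤ) := by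
      rw [hzdef, quadRep_norm, Zsqrtd.norm_mul, hw₁, hw₂]; push_cast; ring
    have hw1z : w₁ ∣ z := (dvd_mul_right w₁ w₂).trans (quadRep_assoc _).dvd
    have hw2z : w₂ ∣ z := (dvd_mul_left w₂ w₁).trans (quadRep_assoc _).dvd
    have hv1z : v₁ ∣ z := by
      rw [heq]; exact (dvd_mul_right v₁ v₂).trans (quadRep_assoc _).dvd
    have hv2z : v₂ ∣ z := by
      rw [heq]; exact (dvd_mul_left v₂ v₁).trans (quadRep_assoc _).dvd
    have a1 : Associated w₁ v₁ :=
      (assoc_gcd hm hn h hz hw1z hw₁).trans (assoc_gcd hm hn h hz hv1z hv₁).symm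
    have hz' : z.norm = ((n * m : ℕ) : ℤ) := by rwa [Nat.mul_comm n m]
    have a2 : Associated w₂ v₂ :=
      (assoc_gcd hn hm h.symm hz' hw2z hw₂).trans (assoc_gcd hn hm h.symm hz' hv2z hv₂).symm
    have e1 : w₁ = v₁ := quad_unique q₁ p₁ a1
    have e2 : w₂ = v₂ := quad_unique q₂ p₂ a2
    subst e1; subst e2; rfl
  · rintro ⟨z, hz, qz⟩
    obtain ⟨n1, n2, hassoc⟩ := gcd_decomp hm hn h hz
    set g₁ := EuclideanDomain.gcd z (m : GI)
    set g₂ := EuclideanDomain.gcd z (n : GI)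
    have hg₁0 : g₁ ≠ 0 := nonzero_of_norm_pos hm n1
    have hg₂0 : g₂ ≠ 0 := nonzero_of_norm_pos hn n2
    refine ⟨⟨⟨quadRep g₁, by rw [quadRep_norm]; exact n1, quadRep_quad hg₁0⟩,
           ⟨quadRep g₂, by rw [quadRep_norm]; exact n2, quadRep_quad hg₂0⟩⟩, ?_⟩
    apply Subtype.ext
    show quadRep (quadRep g₁ * quadRep g₂) = z
    have hmul : Associated (g₁ * g₂) (quadRep g₁ * quadRep g₂) :=
      Associated.mul_mul (quadRep_assoc g₁) (quadRep_assoc g₂)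
    have hzg : Associated z (quadRep g₁ * quadRep g₂) := hassoc.trans hmul
    have hz0 : z ≠ 0 := nonzero_of_norm_pos (by positivity) hz
    rw [← quadRep_eq_quadRep hz0 hzg, quadRep_eq_self qz]

lemma prime_of_norm_prime {z : GI} (h : Prime z.norm) : Prime z := by
  rw [← UniqueFactorizationMonoid.irreducible_iff_prime]
  have hp : Nat.Prime z.norm.natAbs := Int.prime_iff_natAbs_prime.1 h
  constructor
  · intro hu
    exact hp.ne_one (Zsqrtd.norm_eq_one_iff.2 hu)
  · intro a b hab
    have hn : a.norm.natAbs * b.norm.natAbs = z.norm.natAbs := by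
      rw [← Int.natAbs_mul, ← Zsqrtd.norm_mul, ← hab]
    rcases (Nat.Prime.eq_one_or_self_of_dvd hp a.norm.natAbs ⟨_, hn.symm⟩) with h1 | h1
    · exact Or.inl (Zsqrtd.norm_eq_one_iff.1 h1)
    · refine Or.inr (Zsqrtd.norm_eq_one_iff.1 ?_)
      have hppos := hp.pos
      rw [h1] at hn
      have := Nat.eq_of_mul_eq_mul_left hppos (by omega : z.norm.natAbs * b.norm.natAbs = z.norm.natAbs * 1)
      omega

lemma norm_pow (z : GI) (k : ℕ) : (z^k).norm = z.norm ^ k := by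
  induction k with
  | zero => simp
  | succ k ih => rw [pow_succ, pow_succ, Zsqrtd.norm_mul, ih]

lemma isCoprime_of_prime_not_dvd {P z : GI} (hP : Prime P) (h : ¬ P ∣ z) :
    IsCoprime z P := by
  rw [← EuclideanDomain.gcd_isUnit_iff]
  set g := EuclideanDomain.gcd z P with hg
  obtain ⟨c, hc⟩ := EuclideanDomain.gcd_dvd_right z P
  rcases hP.irreducible.isUnit_or_isUnit hc with h1 | h1
  · exact h1
  · exfalso
    apply h
    obtain ⟨u, rfl⟩ := h1
    have : P ∣ g := ⟨((u⁻¹ : GIˣ) : GI), by rw [hc, mul_assoc, Units.mul_inv, mul_one]⟩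
    exact this.trans (EuclideanDomain.gcd_dvd_left z P)

lemma dvd_mul_prime_pow {P Q : GI} (hP : Prime P) (hQ : Prime Q) {t : ℕ} (s : ℕ) {z : GI}
    (h : z ∣ P ^ s * Q ^ t) : ∃ c ≤ s, ∃ e ≤ t, Associated z (P ^ c * Q ^ e) := by
  induction s generalizing z with
  | zero =>
    simp only [pow_zero, one_mul] at h
    obtain ⟨e, he, ha⟩ := (dvd_prime_pow hQ t).1 h
    exact ⟨0, le_rfl, e, he, by simpa using ha⟩
  | succ s ih =>
    by_cases hpz : P ∣ z
    · obtain ⟨z₁, rfl⟩ := hpz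
      have hz₁ : z₁ ∣ P ^ s * Q ^ t := by
        have h' : P * z₁ ∣ P * (P ^ s * Q ^ t) := by
          have e : P ^ (s+1) * Q ^ t = P * (P ^ s * Q ^ t) := by ring
          rwa [e] at h
        exact (mul_dvd_mul_iff_left hP.ne_zero).1 h'
      obtain ⟨c, hc, e, he, ha⟩ := ih hz₁
      refine ⟨c + 1, by omega, e, he, ?_⟩
      have := ha.mul_left P
      have e2 : P * (P ^ c * Q ^ e) = P ^ (c+1) * Q ^ e := by ring
      rwa [e2] at this
    · have hcop : IsCoprime z (P ^ (s+1)) := (isCoprime_of_prime_not_dvd hP hpz).pow_right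
      have hzq : z ∣ Q ^ t := hcop.dvd_of_dvd_mul_left h
      obtain ⟨e, he, ha⟩ := (dvd_prime_pow hQ t).1 hzq
      exact ⟨0, by omega, e, he, by simpa using ha⟩

lemma card_QS_eq_one {n : ℕ} (hn : 0 < n) (w : GI) (hw : w.norm = (n : ℤ))
    (huniq : ∀ z : GI, z.norm = (n : ℤ) → Associated z w) : Nat.card (QS n) = 1 := by
  rw [Nat.card_eq_one_iff_unique]
  constructor
  · constructor
    rintro ⟨z1, h1, q1⟩ ⟨z2, h2, q2⟩
    exact Subtype.ext (quad_unique q1 q2 ((huniq z1 h1).trans (huniq z2 h2).symm))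
  · exact ⟨⟨quadRep w, by rw [quadRep_norm, hw], quadRep_quad (nonzero_of_norm_pos hn hw)⟩⟩

lemma card_QS_one : Nat.card (QS 1) = 1 := by
  refine card_QS_eq_one one_pos 1 (by simp) (fun z hz => ?_)
  rw [associated_one_iff_isUnit, ← Zsqrtd.norm_eq_one_iff' (by norm_num) z]
  simpa using hz

-- case p % 4 = 3
lemma card_QS_pp_three {p : ℕ} (hp : p.Prime) (hp3 : p % 4 = 3) (k : ℕ) :
    Nat.card (QS (p ^ k)) = if Even k then 1 else 0 := by
  haveI : Fact p.Prime := ⟨hp⟩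
  have hprime : Prime (p : GI) := (GaussianInt.prime_iff_mod_four_eq_three_of_nat_prime p).2 hp3
  have hclass : ∀ z : GI, z.norm = ((p ^ k : ℕ) : ℤ) → ∃ i, k = 2 * i ∧ Associated z ((p : GI) ^ i) := by
    intro z hz
    have hdvd : z ∣ ((p ^ k : ℕ) : GI) := dvd_natCast_of_norm hz
    rw [Nat.cast_pow] at hdvd
    obtain ⟨i, hi, ha⟩ := (dvd_prime_pow hprime k).1 hdvd
    have hnorm : ((p : ℤ)) ^ k = ((p : ℤ) * (p : ℤ)) ^ i := by
      have := norm_eq_of_associated ha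
      rw [hz, norm_pow, Zsqrtd.norm_natCast] at this
      push_cast at this ⊢
      linarith [this]
    have hk2i : p ^ k = p ^ (2 * i) := by
      have : ((p : ℤ)) ^ k = ((p : ℤ)) ^ (2 * i) := by rw [hnorm, two_mul, pow_add, mul_pow]
      exact_mod_cast this
    have : k = 2 * i := Nat.pow_right_injective hp.two_le hk2i
    exact ⟨i, this, ha⟩
  by_cases hk : Even k
  · rw [if_pos hk]
    obtain ⟨a, ha⟩ := hk
    have hka : k = 2 * a := by omega
    refine card_QS_eq_one (pow_pos hp.pos k) ((p : GI) ^ a) ?_ ?_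
    · rw [norm_pow, Zsqrtd.norm_natCast]
      push_cast
      rw [hka]; ring
    · intro z hz
      obtain ⟨i, hi, hzi⟩ := hclass z hz
      have : i = a := by omega
      rwa [this] at hzi
  · rw [if_neg hk, Nat.card_eq_zero]
    left
    constructor
    rintro ⟨z, hz, qz⟩
    obtain ⟨i, hi, -⟩ := hclass z hz
    exact hk ⟨i, by omega⟩



-- case p = 2
lemma card_QS_pp_two (k : ℕ) : Nat.card (QS (2 ^ k)) = 1 := by
  set π : GI := ⟨1, 1⟩ with hπ
  have hnormπ : π.norm = 2 := by simp [Zsqrtd.norm, hπ]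
  have hPπ : Prime π := prime_of_norm_prime (by rw [hnormπ]; exact Int.prime_two)
  have h2 : Associated ((2 : GI) ^ k) (π ^ (2 * k)) := by
    have ha2 : Associated (π ^ 2) (2 : GI) := by
      have hu : IsUnit (⟨0, -1⟩ : GI) := by rw [isUnit_iff]; tauto
      refine ⟨hu.unit, ?_⟩
      rw [IsUnit.unit_spec]
      ext <;> simp [hπ, pow_two, Zsqrtd.re_mul, Zsqrtd.im_mul]
    have := ha2.symm.pow_pow (n := k)
    rw [← pow_mul] at this
    exact this
  refine card_QS_eq_one (pow_pos (by norm_num) k) (π ^ k) ?_ ?_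
  · rw [norm_pow, hnormπ]; push_cast; ring
  · intro z hz
    have hdvd : z ∣ ((2 ^ k : ℕ) : GI) := dvd_natCast_of_norm hz
    rw [Nat.cast_pow] at hdvd
    have hdvd2 : z ∣ π ^ (2 * k) := hdvd.trans (by exact_mod_cast h2.dvd)
    obtain ⟨i, hi, ha⟩ := (dvd_prime_pow hPπ (2 * k)).1 hdvd2
    have : (2 : ℤ) ^ k = 2 ^ i := by
      have := norm_eq_of_associated ha
      rw [hz, norm_pow, hnormπ] at this
      push_cast at this
      linarith
    have : k = i := by
      have h' : (2 : ℕ) ^ k = 2 ^ i := by exact_mod_cast this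
      exact Nat.pow_right_injective le_rfl h'
    rwa [← this] at ha

-- case p % 4 = 1
lemma card_QS_pp_one {p : ℕ} (hp : p.Prime) (hp1 : p % 4 = 1) (k : ℕ) :
    Nat.card (QS (p ^ k)) = k + 1 := by
  haveI : Fact p.Prime := ⟨hp⟩
  obtain ⟨a, b, hab⟩ := Nat.Prime.sq_add_sq (p := p) (by omega)
  set π : GI := ⟨(a : ℤ), (b : ℤ)⟩ with hπ
  set π' : GI := star π with hπ'
  have hnormπ : π.norm = (p : ℤ) := by
    simp only [Zsqrtd.norm, hπ]
    push_cast [← hab]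
    ring
  have hnormπ' : π'.norm = (p : ℤ) := by rw [hπ', Zsqrtd.norm_conj, hnormπ]
  have hpint : Prime ((p : ℤ)) := Int.prime_iff_natAbs_prime.2 (by simpa using hp)
  have hP : Prime π := prime_of_norm_prime (hnormπ ▸ hpint)
  have hQ : Prime π' := prime_of_norm_prime (hnormπ' ▸ hpint)
  have hsplit : ((p : ℕ) : GI) = π * π' := by
    have := Zsqrtd.norm_eq_mul_conj π
    rw [hnormπ] at this
    exact_mod_cast this
  have hnassoc : ¬ Associated π π' := by
    rintro ⟨u, hu⟩
    have h4 := (isUnit_iff u.val).1 u.isUnit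
    have hb0 : ¬ (b = 0) := by
      rintro rfl
      simp at hab
      rcases (Nat.Prime.eq_one_or_self_of_dvd hp a (Dvd.intro a (by rw [← hab]; ring))) with h | h
      · subst h; simp at hab; have := hp.two_le; omega
      · subst h; nlinarith [hp.two_le]
    have ha0 : ¬ (a = 0) := by
      rintro rfl
      simp at hab
      rcases (Nat.Prime.eq_one_or_self_of_dvd hp b (Dvd.intro b (by rw [← hab]; ring))) with h | h
      · subst h; simp at hab; have := hp.two_le; omega
      · subst h; nlinarith [hp.two_le]
    rcases h4 with h' | h' | h' | h' <;> rw [h'] at hu <;>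
      simp only [hπ, hπ', Zsqrtd.ext_iff, Zsqrtd.re_mul, Zsqrtd.im_mul, Zsqrtd.re_star,
        Zsqrtd.im_star] at hu <;> push_cast at hu
    · omega
    · omega
    · omega
    · -- u = ⟨0,-1⟩ : π * u = ⟨b, -a⟩ = ⟨a, -b⟩ ⇒ a = b ⇒ p = 2a²
      have hab' : (a : ℤ) = (b : ℤ) := by omega
      have : a = b := by exact_mod_cast hab'
      subst this
      have h2p : 2 ∣ p := by
        refine ⟨a * a, ?_⟩
        rw [← hab]; ring
      have := (Nat.Prime.eq_one_or_self_of_dvd hp 2 h2p).resolve_left (by norm_num)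
      omega
  -- key classification
  have hclass : ∀ z : GI, z.norm = ((p ^ k : ℕ) : ℤ) →
      ∃ c ≤ k, Associated z (π ^ c * π' ^ (k - c)) := by
    intro z hz
    have hdvd : z ∣ ((p ^ k : ℕ) : GI) := dvd_natCast_of_norm hz
    have : ((p ^ k : ℕ) : GI) = π ^ k * π' ^ k := by
      rw [Nat.cast_pow, hsplit, mul_pow]
    rw [this] at hdvd
    obtain ⟨c, hc, e, he, ha⟩ := dvd_mul_prime_pow hP hQ k hdvd
    have hce : c + e = k := by
      have hn := norm_eq_of_associated ha
      rw [hz, Zsqrtd.norm_mul, norm_pow, norm_pow, hnormπ, hnormπ', ← pow_add] at hn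
      have hn' : (p : ℤ) ^ k = (p : ℤ) ^ (c + e) := by push_cast at hn ⊢; linarith
      have : p ^ k = p ^ (c + e) := by exact_mod_cast hn'
      exact (Nat.pow_right_injective hp.two_le this).symm
    refine ⟨c, by omega, ?_⟩
    have : e = k - c := by omega
    rwa [← this]
  -- the elements π^c * π'^(k-c) for distinct c are non-associated
  have hdistinct : ∀ c l, c ≤ k → l ≤ k → c < l →
      ¬ Associated (π ^ c * π' ^ (k - c)) (π ^ l * π' ^ (k - l)) := by
    intro c l hck hlk hcl hassoc
    have h1 : π ^ l ∣ π ^ c * π' ^ (k - c) := (dvd_mul_right _ _).trans hassoc.symm.dvd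
    have h2 : π ^ c * π ^ (l - c) ∣ π ^ c * π' ^ (k - c) := by
      have : π ^ c * π ^ (l - c) = π ^ l := by rw [← pow_add]; congr 1; omega
      rwa [this]
    have h3 : π ^ (l - c) ∣ π' ^ (k - c) := (mul_dvd_mul_iff_left (pow_ne_zero c hP.ne_zero)).1 h2
    have h4 : π ∣ π' ^ (k - c) := dvd_trans (dvd_pow_self π (by omega : l - c ≠ 0)) h3
    have h5 : π ∣ π' := hP.dvd_of_dvd_pow h4
    obtain ⟨w, hw⟩ := h5
    rcases hQ.irreducible.isUnit_or_isUnit hw with h6 | h6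
    · exact hP.not_unit h6
    · exact hnassoc ⟨h6.unit, by rw [IsUnit.unit_spec, ← hw]⟩
  -- now count
  have hppos : 0 < p ^ k := pow_pos hp.pos k
  have hnormc : ∀ c : ℕ, c ≤ k → (π ^ c * π' ^ (k - c)).norm = ((p ^ k : ℕ) : ℤ) := by
    intro c hc
    rw [Zsqrtd.norm_mul, norm_pow, norm_pow, hnormπ, hnormπ', ← pow_add]
    congr 1
    · push_cast; congr 1; omega
  have hne : ∀ c : ℕ, c ≤ k → π ^ c * π' ^ (k - c) ≠ 0 :=
    fun c hc => nonzero_of_norm_pos hppos (hnormc c hc)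
  have := Nat.card_eq_of_bijective
    (f := fun j : Fin (k + 1) => (⟨quadRep (π ^ (j : ℕ) * π' ^ (k - (j : ℕ))),
      by rw [quadRep_norm]; exact hnormc j (by omega),
      quadRep_quad (hne j (by omega))⟩ : QS (p ^ k)))
    ⟨by
      rintro ⟨c, hc⟩ ⟨l, hl⟩ heq
      simp only [Subtype.mk.injEq] at heq
      have hassoc : Associated (π ^ c * π' ^ (k - c)) (π ^ l * π' ^ (k - l)) := by
        have a1 := quadRep_assoc (π ^ c * π' ^ (k - c))
        have a2 := quadRep_assoc (π ^ l * π' ^ (k - l))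
        rw [heq] at a1
        exact a1.trans a2.symm
      rcases Nat.lt_trichotomy c l with h | h | h
      · exact absurd hassoc (hdistinct c l (by omega) (by omega) h)
      · exact Fin.ext h
      · exact absurd hassoc.symm (hdistinct l c (by omega) (by omega) h), by
      rintro ⟨z, hz, qz⟩
      obtain ⟨c, hc, ha⟩ := hclass z hz
      refine ⟨⟨c, by omega⟩, ?_⟩
      apply Subtype.ext
      show quadRep (π ^ c * π' ^ (k - c)) = z
      have hz0 : z ≠ 0 := nonzero_of_norm_pos hppos hz
      rw [← quadRep_eq_quadRep hz0 ha, quadRep_eq_self qz]⟩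
  have h2 := this.symm
  rw [show Nat.card (Fin (k + 1)) = k + 1 by simp] at h2
  exact h2


lemma chi4_mul (m n : ℕ) : chi4 (m * n) = chi4 m * chi4 n := by
  have h1 : m % 4 = 0 ∨ m % 4 = 1 ∨ m % 4 = 2 ∨ m % 4 = 3 := by omega
  have h2 : n % 4 = 0 ∨ n % 4 = 1 ∨ n % 4 = 2 ∨ n % 4 = 3 := by omega
  unfold chi4
  rw [Nat.mul_mod]
  rcases h1 with h | h | h | h <;> rcases h2 with h' | h' | h' | h' <;> rw [h, h'] <;> norm_num

/-- chi4 as an arithmetic function -/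
def chi4AF : ArithmeticFunction ℤ := ⟨chi4, by simp [chi4]⟩

lemma chi4AF_mult : chi4AF.IsMultiplicative :=
  ArithmeticFunction.IsMultiplicative.iff_ne_zero.2
    ⟨by simp [chi4AF, chi4], fun _ _ _ => chi4_mul _ _⟩

/-- r0-as-card as an arithmetic function -/
noncomputable def RAF : ArithmeticFunction ℤ :=
  ⟨fun n => if n = 0 then 0 else (Nat.card (QS n) : ℤ), by simp⟩

lemma RAF_apply {n : ℕ} (hn : n ≠ 0) : RAF n = (Nat.card (QS n) : ℤ) := by
  simp [RAF, hn]

lemma RAF_mult : RAF.IsMultiplicative := by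
  constructor
  · rw [RAF_apply one_ne_zero, card_QS_one]; norm_num
  · intro m n h
    rcases Nat.eq_zero_or_pos m with rfl | hm
    · have : n = 1 := by simpa using h
      subst this
      simp [RAF]
    rcases Nat.eq_zero_or_pos n with rfl | hn
    · have : m = 1 := by simpa using h.symm
      subst this
      simp [RAF]
    rw [RAF_apply (by positivity), RAF_apply (by omega), RAF_apply (by omega),
      card_QS_mul hm hn h]
    push_cast; ring

-- sums of chi4 over divisors of prime powers
lemma sum_chi4_pp_one {p : ℕ} (hp : p.Prime) (hp1 : p % 4 = 1) (k : ℕ) :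
    ∑ i ∈ Finset.range (k + 1), chi4 (p ^ i) = (k : ℤ) + 1 := by
  have h : ∀ i, chi4 (p ^ i) = 1 := by
    intro i
    have : p ^ i % 4 = 1 := by simp [Nat.pow_mod, hp1]
    simp [chi4, this]
  simp [h]

lemma sum_chi4_pp_three {p : ℕ} (hp : p.Prime) (hp3 : p % 4 = 3) (k : ℕ) :
    ∑ i ∈ Finset.range (k + 1), chi4 (p ^ i) = if Even k then 1 else 0 := by
  have hmod : ∀ i, p ^ i % 4 = if Even i then 1 else 3 := by
    intro i
    induction i with
    | zero => simp
    | succ i ih =>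
      by_cases h : Even i
      · rw [pow_succ, Nat.mul_mod, ih, hp3, if_pos h, if_neg (by simp [Nat.even_add_one, h])]
      · rw [pow_succ, Nat.mul_mod, ih, hp3, if_neg h, if_pos (by simp [Nat.even_add_one, h])]
  have h : ∀ i, chi4 (p ^ i) = (-1 : ℤ) ^ i := by
    intro i
    rw [chi4, hmod i]
    by_cases h : Even i
    · simp [h, Even.neg_one_pow h]
    · simp [h, Odd.neg_one_pow (Nat.not_even_iff_odd.1 h)]
  calc ∑ i ∈ Finset.range (k + 1), chi4 (p ^ i)
      = ∑ i ∈ Finset.range (k + 1), (-1 : ℤ) ^ i := by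
        exact Finset.sum_congr rfl (fun i _ => h i)
    _ = if Even (k + 1) then 0 else 1 := neg_one_geom_sum
    _ = if Even k then 1 else 0 := by
        by_cases h : Even k <;> simp [h, Nat.even_add_one]

lemma sum_chi4_pp_two (k : ℕ) :
    ∑ i ∈ Finset.range (k + 1), chi4 (2 ^ i) = 1 := by
  induction k with
  | zero => simp [chi4]
  | succ k ih =>
    rw [Finset.sum_range_succ, ih]
    have : chi4 (2 ^ (k + 1)) = 0 := by
      have h : 2 ^ (k + 1) % 4 = 2 ∨ 2 ^ (k + 1) % 4 = 0 := by
        rcases k with _ | j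
        · left; rfl
        · right
          have : 2 ^ (j + 2) = 4 * 2 ^ j := by ring
          rw [this, Nat.mul_mod_right]
      rcases h with h | h <;> simp [chi4, h]
    rw [this, add_zero]

theorem r0_eq_sum_chi4' (n : ℕ) (hn : 0 < n) :
    (r0 n : ℤ) = ∑ d ∈ n.divisors, chi4 d := by
  have key : RAF = ↑ArithmeticFunction.zeta * chi4AF := by
    rw [ArithmeticFunction.IsMultiplicative.eq_iff_eq_on_prime_powers RAF RAF_mult _
      (ArithmeticFunction.isMultiplicative_zeta.natCast.mul chi4AF_mult)]
    intro p i hp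
    rw [ArithmeticFunction.coe_zeta_mul_apply, Nat.sum_divisors_prime_pow hp,
      RAF_apply (pow_pos hp.pos i).ne']
    have hchi : ∀ x ∈ Finset.range (i + 1), chi4AF (p ^ x) = chi4 (p ^ x) := fun _ _ => rfl
    rw [Finset.sum_congr rfl hchi]
    have hp4 : p = 2 ∨ p % 4 = 1 ∨ p % 4 = 3 := by
      rcases Nat.lt_or_ge p 2 with h | h
      · interval_cases p <;> simp_all [Nat.Prime]
      · by_contra hcon
        push_neg at hcon
        obtain ⟨h2, h1, h3⟩ := hcon
        have : p % 4 = 0 ∨ p % 4 = 2 := by omega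
        have h2d : 2 ∣ p := by omega
        rcases (hp.eq_one_or_self_of_dvd 2 h2d) with h' | h' <;> omega
    rcases hp4 with rfl | hp1 | hp3
    · rw [card_QS_pp_two, sum_chi4_pp_two]; norm_num
    · rw [card_QS_pp_one hp hp1, sum_chi4_pp_one hp hp1]; push_cast; ring
    · rw [card_QS_pp_three hp hp3, sum_chi4_pp_three hp hp3]
      by_cases h : Even i <;> simp [h]
  have h1 : (r0 n : ℤ) = RAF n := by
    rw [RAF_apply (by omega), r0_eq_card]
  rw [h1, key, ArithmeticFunction.coe_zeta_mul_apply]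
  rfl


end TwoSq

theorem r0_eq_sum_chi4 (n : ℕ) (hn : 0 < n) :
    (r0 n : ℤ) = ∑ d ∈ n.divisors, chi4 d := by
  exact TwoSq.r0_eq_sum_chi4' n hn
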